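/- Let H be a real Hilbert space and L a bounded self-adjoint operator on H such that for some δ₀ > 0 the spectrum of L intersected with (−δ₀, δ₀) is contained in {0}. Let V ⊆ W be closed subspaces of H with ker L ⊆ V, and let U be the orthogonal complement of V in W (so W = V ⊕ U orthogonally and π_U = π_W − π_V). Then for every x ∈ U, ‖π_U(L x)‖ ≥ (δ₀ − ‖π_W L − L π_W‖ − ‖π_V L − L π_V‖)·‖x‖. In particular, if ‖π_W L − L π_W‖ + ‖π_V L − L π_V‖ < δ₀, then the operator π_U ∘ L restricted to U is injective (the bilinear form ⟨π_U L x, y⟩ on U is nondegenerate). -/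

import Mathlib

set_option maxHeartbeats 1000000
set_option synthInstance.maxHeartbeats 400000

open scoped InnerProductSpace

/-- The orthogonal projection of a Hilbert space onto (the closure of) a subspace, viewed as a
continuous linear operator `H →L[ℝ] H`. For a closed subspace this is the usual orthogonal
projection onto it. -/
noncomputable def orthProj {H : Type*} [NormedAddCommGroup H] [InnerProductSpace ℝ H]
    [CompleteSpace H] (V : Submodule ℝ H) : H →L[ℝ] H :=
  V.topologicalClosure.subtypeL.comp V.topologicalClosure.orthogonalProjectionOnto

section Helpers

variable {H : Type*} [NormedAddCommGroup H] [InnerProductSpace ℝ H] [CompleteSpace H]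

private lemma sa_symm {S : H →L[ℝ] H} (hS : IsSelfAdjoint S) (x y : H) :
    ⟪S x, y⟫_ℝ = ⟪x, S y⟫_ℝ :=
  ContinuousLinearMap.isSelfAdjoint_iff_isSymmetric.mp hS x y

/-- For a self-adjoint operator, a bound on the quadratic form gives a bound on the norm. -/
private lemma norm_le_of_forall_abs_inner_le {S : H →L[ℝ] H} (hS : IsSelfAdjoint S) {c : ℝ}
    (hc : 0 ≤ c) (h : ∀ x, |⟪S x, x⟫_ℝ| ≤ c * ‖x‖ ^ 2) : ‖S‖ ≤ c := by
  refine S.opNorm_le_bound hc fun x => ?_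
  rcases eq_or_ne (S x) 0 with h0 | h0
  · simp only [h0, norm_zero]
    positivity
  have hSx : 0 < ‖S x‖ := norm_pos_iff.mpr h0
  set y : H := (‖x‖ / ‖S x‖) • S x with hy_def
  have hy : ‖y‖ = ‖x‖ := by
    rw [hy_def, norm_smul, Real.norm_eq_abs, abs_div, abs_of_nonneg (norm_nonneg x),
      abs_of_nonneg (norm_nonneg (S x))]
    field_simp
  have hsymm : ⟪S y, x⟫_ℝ = ⟪S x, y⟫_ℝ := by
    rw [sa_symm hS, real_inner_comm]
  have e1 : ⟪S (x + y), x + y⟫_ℝ = ⟪S x, x⟫_ℝ + 2 * ⟪S x, y⟫_ℝ + ⟪S y, y⟫_ℝ := by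
    simp only [map_add, inner_add_left, inner_add_right]
    linarith [hsymm]
  have e2 : ⟪S (x - y), x - y⟫_ℝ = ⟪S x, x⟫_ℝ - 2 * ⟪S x, y⟫_ℝ + ⟪S y, y⟫_ℝ := by
    simp only [map_sub, inner_sub_left, inner_sub_right]
    linarith [hsymm]
  have e3 : 4 * ⟪S x, y⟫_ℝ = ⟪S (x + y), x + y⟫_ℝ - ⟪S (x - y), x - y⟫_ℝ := by
    rw [e1, e2]; ring
  have hpar : ‖x + y‖ ^ 2 + ‖x - y‖ ^ 2 = 2 * (‖x‖ ^ 2 + ‖y‖ ^ 2) := by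
    have := parallelogram_law_with_norm ℝ x y
    ring_nf
    ring_nf at this
    linarith
  have hb1 := h (x + y)
  have hb2 := h (x - y)
  have hxy : ⟪S x, y⟫_ℝ = ‖x‖ * ‖S x‖ := by
    rw [hy_def, real_inner_smul_right, real_inner_self_eq_norm_mul_norm]
    field_simp
  have h4 : 4 * (‖x‖ * ‖S x‖) ≤ 4 * (c * ‖x‖ ^ 2) := by
    rw [← hxy]
    have : 4 * ⟪S x, y⟫_ℝ ≤ |⟪S (x + y), x + y⟫_ℝ| + |⟪S (x - y), x - y⟫_ℝ| := by
      rw [e3]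
      have := abs_sub_abs_le_abs_sub (⟪S (x + y), x + y⟫_ℝ) (⟪S (x - y), x - y⟫_ℝ)
      have h5 := le_abs_self (⟪S (x + y), x + y⟫_ℝ - ⟪S (x - y), x - y⟫_ℝ)
      have h6 := abs_sub (⟪S (x + y), x + y⟫_ℝ) (⟪S (x - y), x - y⟫_ℝ)
      linarith [h5, h6]
    calc 4 * ⟪S x, y⟫_ℝ ≤ |⟪S (x + y), x + y⟫_ℝ| + |⟪S (x - y), x - y⟫_ℝ| := this
      _ ≤ c * ‖x + y‖ ^ 2 + c * ‖x - y‖ ^ 2 := add_le_add hb1 hb2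
      _ = c * (‖x + y‖ ^ 2 + ‖x - y‖ ^ 2) := by ring
      _ = c * (2 * (‖x‖ ^ 2 + ‖y‖ ^ 2)) := by rw [hpar]
      _ = 4 * (c * ‖x‖ ^ 2) := by rw [hy]; ring
  rcases eq_or_lt_of_le (norm_nonneg x) with hx0 | hx0
  · have : x = 0 := by rwa [eq_comm, norm_eq_zero] at hx0
    rw [this] at h0; simp at h0
  · nlinarith

/-- Cauchy-Schwarz for the semi-definite form of a nonnegative self-adjoint operator. -/
private lemma semi_cauchy_schwarz {S : H →L[ℝ] H} (hS : IsSelfAdjoint S)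
    (hpos : ∀ x, 0 ≤ ⟪S x, x⟫_ℝ) (u v : H) :
    ⟪S u, v⟫_ℝ ^ 2 ≤ ⟪S u, u⟫_ℝ * ⟪S v, v⟫_ℝ := by
  set a := ⟪S u, u⟫_ℝ
  set b := ⟪S u, v⟫_ℝ
  set c := ⟪S v, v⟫_ℝ
  have key : ∀ t : ℝ, 0 ≤ a + 2 * t * b + t ^ 2 * c := by
    intro t
    have h := hpos (u + t • v)
    have hvu : ⟪S v, u⟫_ℝ = b := by rw [sa_symm hS, real_inner_comm]
    simp only [map_add, map_smul, inner_add_left, inner_add_right, inner_smul_left,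
      inner_smul_right, RCLike.star_def, starRingEnd_apply, star_trivial] at h
    rw [hvu] at h
    ring_nf at h ⊢
    linarith
  have ha : 0 ≤ a := hpos u
  have hc : 0 ≤ c := hpos v
  rcases eq_or_lt_of_le hc with hc0 | hc0
  · -- c = 0, need b = 0
    have hb0 : b = 0 := by
      by_contra hb0
      have hkey := key (-(a + 1) / (2 * b))
      rw [← hc0] at hkey
      have h2b : 2 * (-(a + 1) / (2 * b)) * b = -(a + 1) := by
        field_simp
      rw [h2b] at hkey
      simp only [mul_zero, add_zero] at hkey
      linarith
    rw [hb0, ← hc0]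
    norm_num
  · have hkey := key (-b / c)
    have hid : a + 2 * (-b / c) * b + (-b / c) ^ 2 * c = a - b ^ 2 / c := by
      field_simp
      ring
    rw [hid] at hkey
    have h2 : b ^ 2 / c ≤ a := by linarith
    rw [div_le_iff₀ hc0] at h2
    linarith

/-- For nonnegative self-adjoint `S`, `‖S x‖² ≤ ‖S‖ ⟨S x, x⟩`. -/
private lemma sq_norm_le_of_nonneg {S : H →L[ℝ] H} (hS : IsSelfAdjoint S)
    (hpos : ∀ x, 0 ≤ ⟪S x, x⟫_ℝ) (x : H) : ‖S x‖ ^ 2 ≤ ‖S‖ * ⟪S x, x⟫_ℝ := by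
  rcases eq_or_ne (S x) 0 with h0 | h0
  · rw [h0]
    simp
  have h1 := semi_cauchy_schwarz hS hpos x (S x)
  have h2 : ⟪S x, S x⟫_ℝ = ‖S x‖ ^ 2 := by
    rw [real_inner_self_eq_norm_mul_norm]; ring
  have h3 : ⟪S (S x), S x⟫_ℝ ≤ ‖S‖ * ‖S x‖ ^ 2 := by
    calc ⟪S (S x), S x⟫_ℝ ≤ ‖S (S x)‖ * ‖S x‖ := real_inner_le_norm _ _
      _ ≤ (‖S‖ * ‖S x‖) * ‖S x‖ := by
          gcongr
          exact S.le_opNorm _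
      _ = ‖S‖ * ‖S x‖ ^ 2 := by ring
  have hSx : 0 < ‖S x‖ := norm_pos_iff.mpr h0
  have hpx := hpos x
  have h4 : ⟪S x, x⟫_ℝ * ⟪S (S x), S x⟫_ℝ ≤ ⟪S x, x⟫_ℝ * (‖S‖ * ‖S x‖ ^ 2) :=
    mul_le_mul_of_nonneg_left h3 hpx
  nlinarith [h1, h2, h4, mul_pos hSx hSx, hpx]

/-- A coercive operator is invertible. -/
private lemma isUnit_of_coercive {S : H →L[ℝ] H} {c : ℝ} (hc : 0 < c)
    (h : ∀ x, c * ‖x‖ ^ 2 ≤ ⟪S x, x⟫_ℝ) : IsUnit S := by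
  refine ContinuousLinearMap.isUnit_of_forall_le_norm_inner_map S (c := ⟨c, hc.le⟩)
    (by exact_mod_cast hc) fun x => ?_
  have h1 := h x
  have h2 : ⟪S x, x⟫_ℝ ≤ |⟪S x, x⟫_ℝ| := le_abs_self _
  calc ‖x‖ ^ 2 * c = c * ‖x‖ ^ 2 := by ring
    _ ≤ ⟪S x, x⟫_ℝ := h1
    _ ≤ ‖⟪S x, x⟫_ℝ‖ := by rw [Real.norm_eq_abs]; exact h2

/-- The supremum of the quadratic form of a self-adjoint operator on the unit sphere:
it bounds the form, and subtracting it from `S` yields a non-invertible operator. -/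
private lemma exists_sup_form [Nontrivial H] {S : H →L[ℝ] H} (hS : IsSelfAdjoint S) :
    ∃ M : ℝ, (∀ x, ⟪S x, x⟫_ℝ ≤ M * ‖x‖ ^ 2) ∧ ¬ IsUnit (M • (1 : H →L[ℝ] H) - S) := by
  set im : Set ℝ := (fun x => ⟪S x, x⟫_ℝ) '' {x : H | ‖x‖ = 1} with him
  have hne : im.Nonempty := by
    obtain ⟨x, hx⟩ := exists_norm_eq H (zero_le_one (α := ℝ))
    exact ⟨⟪S x, x⟫_ℝ, ⟨x, hx, rfl⟩⟩
  have hbdd : BddAbove im := by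
    refine ⟨‖S‖, fun y hy => ?_⟩
    obtain ⟨x, hx, rfl⟩ := hy
    calc ⟪S x, x⟫_ℝ ≤ ‖S x‖ * ‖x‖ := real_inner_le_norm _ _
      _ ≤ ‖S‖ * ‖x‖ * ‖x‖ := by gcongr; exact S.le_opNorm _
      _ = ‖S‖ := by rw [Set.mem_setOf_eq.mp hx]; ring
  set M := sSup im with hM
  have hbound : ∀ x, ⟪S x, x⟫_ℝ ≤ M * ‖x‖ ^ 2 := by
    intro x
    rcases eq_or_ne x 0 with rfl | hx0
    · simp
    have hxn : 0 < ‖x‖ := norm_pos_iff.mpr hx0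
    have hmem : ⟪S ((‖x‖⁻¹ : ℝ) • x), (‖x‖⁻¹ : ℝ) • x⟫_ℝ ∈ im := by
      refine ⟨(‖x‖⁻¹ : ℝ) • x, ?_, rfl⟩
      simp [norm_smul, abs_of_nonneg, hxn.le, inv_mul_cancel₀ hxn.ne']
    have hle := le_csSup hbdd hmem
    rw [map_smul, inner_smul_left, inner_smul_right] at hle
    simp only [RCLike.star_def, starRingEnd_apply, star_trivial] at hle
    have hle2 : ‖x‖⁻¹ * (‖x‖⁻¹ * ⟪S x, x⟫_ℝ) ≤ M := hle
    have hne0 : ‖x‖ ≠ 0 := hxn.ne'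
    have hpow : (0:ℝ) < ‖x‖ ^ 2 := by positivity
    have h3 := mul_le_mul_of_nonneg_right hle2 hpow.le
    have hident : ‖x‖⁻¹ * (‖x‖⁻¹ * ⟪S x, x⟫_ℝ) * ‖x‖ ^ 2 = ⟪S x, x⟫_ℝ := by
      rw [show ‖x‖⁻¹ * (‖x‖⁻¹ * ⟪S x, x⟫_ℝ) * ‖x‖ ^ 2
          = ⟪S x, x⟫_ℝ * ((‖x‖⁻¹ * ‖x‖) * (‖x‖⁻¹ * ‖x‖)) by ring, inv_mul_cancel₀ hne0]
      ring
    rwa [hident] at h3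
  refine ⟨M, hbound, ?_⟩
  intro hu
  set T : H →L[ℝ] H := M • (1 : H →L[ℝ] H) - S with hT
  have hTsa : IsSelfAdjoint T := by
    refine IsSelfAdjoint.sub ?_ hS
    rw [IsSelfAdjoint, star_smul, star_trivial, star_one]
  have hTform : ∀ x, ⟪T x, x⟫_ℝ = M * ‖x‖ ^ 2 - ⟪S x, x⟫_ℝ := by
    intro x
    simp only [hT, ContinuousLinearMap.sub_apply, ContinuousLinearMap.smul_apply,
      ContinuousLinearMap.one_apply, inner_sub_left, inner_smul_left,
      RCLike.star_def, starRingEnd_apply, star_trivial]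
    rw [real_inner_self_eq_norm_mul_norm]
    ring
  have hTpos : ∀ x, 0 ≤ ⟪T x, x⟫_ℝ := fun x => by
    rw [hTform]; linarith [hbound x]
  -- T is invertible, hence bounded below
  obtain ⟨v, hv⟩ := hu
  have hC : ∀ x : H, ‖x‖ ≤ ‖(↑v⁻¹ : H →L[ℝ] H)‖ * ‖T x‖ := by
    intro x
    have : (↑v⁻¹ : H →L[ℝ] H) (T x) = x := by
      rw [← hv, ← ContinuousLinearMap.mul_apply, v.inv_mul, ContinuousLinearMap.one_apply]
    calc ‖x‖ = ‖(↑v⁻¹ : H →L[ℝ] H) (T x)‖ := by rw [this]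
      _ ≤ ‖(↑v⁻¹ : H →L[ℝ] H)‖ * ‖T x‖ := ContinuousLinearMap.le_opNorm _ _
  set C := ‖(↑v⁻¹ : H →L[ℝ] H)‖ with hCdef
  have hCpos : 0 < C := by
    obtain ⟨x, hx⟩ := exists_norm_eq H (zero_le_one (α := ℝ))
    have := hC x
    rw [hx] at this
    by_contra hc
    push_neg at hc
    have : C = 0 := le_antisymm hc (norm_nonneg _)
    rw [this] at *
    nlinarith [norm_nonneg (T x), hC x, hx]
  -- pick an almost-maximizer
  set ε := 1 / (C ^ 2 * (‖T‖ + 1)) with hε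
  have hTn : (0:ℝ) ≤ ‖T‖ := norm_nonneg _
  have hεpos : 0 < ε := by positivity
  obtain ⟨y, hy, hy2⟩ := exists_lt_of_lt_csSup hne (show M - ε < M by linarith)
  obtain ⟨x, hx, rfl⟩ := hy
  have hx1 : ‖x‖ = 1 := hx
  have hform : ⟪T x, x⟫_ℝ < ε := by
    rw [hTform, hx1]
    simp only [one_pow, mul_one]
    linarith
  have hTx : 1 ≤ C * ‖T x‖ := by
    have := hC x
    rwa [hx1] at this
  have hsq := sq_norm_le_of_nonneg hTsa hTpos x
  have hTxnn : 0 ≤ ‖T x‖ := norm_nonneg _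
  have h1 : 1 ≤ C ^ 2 * ‖T x‖ ^ 2 := by nlinarith
  have h2 : ‖T‖ * ⟪T x, x⟫_ℝ ≤ ‖T‖ * ε := by
    have := hTpos x
    nlinarith
  have h3 : ‖T x‖ ^ 2 ≤ ‖T‖ * ε := le_trans hsq h2
  have h4 : C ^ 2 * (‖T‖ * ε) < 1 := by
    rw [hε]
    rw [div_eq_inv_mul, mul_one]
    have hne' : C ^ 2 * (‖T‖ + 1) > 0 := by positivity
    rw [show C ^ 2 * (‖T‖ * (C ^ 2 * (‖T‖ + 1))⁻¹) = (C ^ 2 * ‖T‖) * (C ^ 2 * (‖T‖ + 1))⁻¹ by ring]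
    rw [mul_inv_lt_iff₀ hne', one_mul]
    nlinarith [sq_nonneg C]
  nlinarith [sq_nonneg C]

/-- Inverse of a self-adjoint unit is self-adjoint. -/
private lemma isSelfAdjoint_units_inv {A : Type*} [Ring A] [StarRing A] (u : Aˣ)
    (h : IsSelfAdjoint (↑u : A)) : IsSelfAdjoint (↑u⁻¹ : A) := by
  have h1 : star (↑u⁻¹ : A) * star (↑u : A) = 1 := by
    rw [← star_mul, u.mul_inv, star_one]
  have h2 : star (↑u⁻¹ : A) = star (↑u⁻¹ : A) * ((↑u : A) * (↑u⁻¹ : A)) := by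
    rw [u.mul_inv, mul_one]
  rw [IsSelfAdjoint]
  rw [h2, ← mul_assoc, ← h.star_eq, h1, one_mul]

end Helpers

section GapLemma

variable {H : Type*} [NormedAddCommGroup H] [InnerProductSpace ℝ H] [CompleteSpace H]

/-- Quadratic form upper bound for `L (L² + s)⁻¹` under a spectral gap hypothesis. -/
private lemma form_upper_bound [Nontrivial H] {L : H →L[ℝ] H} (hL : IsSelfAdjoint L) {δ₀ : ℝ}
    (hδ₀ : 0 < δ₀) (hgap : ∀ t : ℝ, t ∈ spectrum ℝ L → t = 0 ∨ δ₀ ≤ |t|)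
    {s : ℝ} (hs : 0 < s) (u : (H →L[ℝ] H)ˣ) (hu : (↑u : H →L[ℝ] H) = L * L + s • 1) :
    ∀ x, ⟪(L * (↑u⁻¹ : H →L[ℝ] H)) x, x⟫_ℝ ≤ (1 / δ₀) * ‖x‖ ^ 2 := by
  have hcomm : Commute L (↑u : H →L[ℝ] H) := by
    rw [hu]
    exact Commute.add_right ((Commute.refl L).mul_right (Commute.refl L))
      (((Commute.one_right L)).smul_right s)
  have hcinv : Commute L (↑u⁻¹ : H →L[ℝ] H) := hcomm.units_inv_right
  have husa : IsSelfAdjoint (↑u : H →L[ℝ] H) := by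
    rw [hu]
    refine IsSelfAdjoint.add ?_ ?_
    · rw [IsSelfAdjoint, star_mul, hL.star_eq]
    · rw [IsSelfAdjoint, star_smul, star_trivial, star_one]
  have hinvsa : IsSelfAdjoint (↑u⁻¹ : H →L[ℝ] H) := isSelfAdjoint_units_inv u husa
  have hSsa : IsSelfAdjoint (L * (↑u⁻¹ : H →L[ℝ] H)) := by
    rw [IsSelfAdjoint, star_mul, hinvsa.star_eq, hL.star_eq]
    exact hcinv.symm.eq
  obtain ⟨M, hM, hMnu⟩ := exists_sup_form hSsa
  have hMle : M ≤ 1 / δ₀ := by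
    by_contra hM'
    push_neg at hM'
    have hM0 : 0 < M := lt_trans (by positivity) hM'
    -- Factor `M•1 - L u⁻¹ = Q u⁻¹` with `Q = M•u - L`.
    set Q : H →L[ℝ] H := M • (↑u : H →L[ℝ] H) - L with hQ
    have hfac : M • (1 : H →L[ℝ] H) - L * (↑u⁻¹ : H →L[ℝ] H) = Q * (↑u⁻¹ : H →L[ℝ] H) := by
      rw [hQ, sub_mul, smul_mul_assoc, u.mul_inv]
    have hQnu : ¬ IsUnit Q := by
      intro hQu
      exact hMnu (hfac ▸ hQu.mul u⁻¹.isUnit)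
    have hQform : ∀ x, ⟪Q x, x⟫_ℝ = M * ‖L x‖ ^ 2 + M * s * ‖x‖ ^ 2 - ⟪L x, x⟫_ℝ := by
      intro x
      have h1 : ⟪(L * L) x, x⟫_ℝ = ‖L x‖ ^ 2 := by
        rw [ContinuousLinearMap.mul_apply, sa_symm hL, real_inner_self_eq_norm_mul_norm]
        ring
      simp only [hQ, hu, ContinuousLinearMap.sub_apply, ContinuousLinearMap.smul_apply,
        ContinuousLinearMap.add_apply, ContinuousLinearMap.one_apply, inner_sub_left,
        inner_smul_left, inner_add_left, RCLike.star_def, starRingEnd_apply, star_trivial]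
      rw [h1, real_inner_self_eq_norm_mul_norm]
      ring
    by_cases hdisc : 1 < 4 * s * M ^ 2
    · -- coercive case, Q is invertible: contradiction
      have hcoer : ∀ x, (M * s - 1 / (4 * M)) * ‖x‖ ^ 2 ≤ ⟪Q x, x⟫_ℝ := by
        intro x
        rw [hQform]
        have habs : |⟪L x, x⟫_ℝ| ≤ ‖L x‖ * ‖x‖ := abs_real_inner_le_norm _ _
        have h1 : ⟪L x, x⟫_ℝ ≤ ‖L x‖ * ‖x‖ := le_trans (le_abs_self _) habs
        have hkey : M * (‖L x‖ - ‖x‖ / (2 * M)) ^ 2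
            = M * ‖L x‖ ^ 2 - ‖L x‖ * ‖x‖ + ‖x‖ ^ 2 / (4 * M) := by
          field_simp
          ring
        have hsq2 : 0 ≤ M * (‖L x‖ - ‖x‖ / (2 * M)) ^ 2 :=
          mul_nonneg hM0.le (sq_nonneg _)
        have hdist : (M * s - 1 / (4 * M)) * ‖x‖ ^ 2
            = M * s * ‖x‖ ^ 2 - ‖x‖ ^ 2 / (4 * M) := by
          field_simp
        rw [hdist]
        linarith [hkey, hsq2, h1]
      have hcpos : 0 < M * s - 1 / (4 * M) := by
        rw [sub_pos, div_lt_iff₀ (by positivity)]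
        nlinarith
      exact hQnu (isUnit_of_coercive hcpos hcoer)
    · push_neg at hdisc
      -- real roots case
      set D := Real.sqrt (1 / M ^ 2 - 4 * s) with hD
      have hsub : 0 ≤ 1 / M ^ 2 - 4 * s := by
        have hM2 : (0:ℝ) < M ^ 2 := by positivity
        rw [sub_nonneg, le_div_iff₀ hM2]
        linarith
      have hD2 : D ^ 2 = 1 / M ^ 2 - 4 * s := by
        rw [hD, Real.sq_sqrt hsub]
      have hDnn : 0 ≤ D := Real.sqrt_nonneg _
      have hDlt : D < 1 / M := by
        have h1M : (0:ℝ) < 1 / M := by positivity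
        by_contra hcon
        push_neg at hcon
        have hsq2 : (1 / M) ^ 2 ≤ D ^ 2 := pow_le_pow_left₀ h1M.le hcon 2
        have h1M2 : (1 / M) ^ 2 = 1 / M ^ 2 := by ring
        rw [h1M2, hD2] at hsq2
        linarith
      set t₁ := (1 / M + D) / 2 with ht₁
      set t₂ := (1 / M - D) / 2 with ht₂
      have hsum : t₁ + t₂ = 1 / M := by rw [ht₁, ht₂]; ring
      have hprod : t₁ * t₂ = s := by
        rw [ht₁, ht₂]
        have : (1 / M + D) / 2 * ((1 / M - D) / 2) = (1 / M ^ 2 - D ^ 2) / 4 := by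
          field_simp; ring
        rw [this, hD2]; ring
      have ht₂pos : 0 < t₂ := by rw [ht₂]; linarith
      have ht₁pos : 0 < t₁ := by rw [ht₁]; positivity
      -- factor Q
      have hfac2 : Q = M • ((L - t₁ • 1) * (L - t₂ • 1)) := by
        have expand : (L - t₁ • (1 : H →L[ℝ] H)) * (L - t₂ • 1)
            = L * L - ((t₁ + t₂) • L) + (t₁ * t₂) • (1 : H →L[ℝ] H) := by
          simp only [mul_sub, sub_mul, smul_mul_assoc, mul_smul_comm, one_mul, mul_one,
            smul_smul]
          module
        rw [expand, hsum, hprod, hQ, hu]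
        have hM1 : M • ((1 / M) • L) = L := by
          rw [smul_smul, mul_one_div_cancel hM0.ne', one_smul]
        rw [smul_add, smul_add, smul_sub, hM1]
        abel
      have hMQ : ¬ IsUnit ((L - t₁ • 1) * (L - t₂ • (1 : H →L[ℝ] H))) := by
        intro hP
        apply hQnu
        rw [hfac2]
        have hMu : IsUnit (M • (1 : H →L[ℝ] H)) := by
          refine isUnit_iff_exists.mpr ⟨M⁻¹ • 1, ?_, ?_⟩
          · rw [smul_mul_smul_comm, one_mul, mul_inv_cancel₀ hM0.ne', one_smul]
          · rw [smul_mul_smul_comm, one_mul, inv_mul_cancel₀ hM0.ne', one_smul]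
        have : M • ((L - t₁ • 1) * (L - t₂ • (1:H →L[ℝ] H)))
            = (M • (1:H →L[ℝ] H)) * ((L - t₁ • 1) * (L - t₂ • 1)) := by
          rw [smul_mul_assoc, one_mul]
        rw [this]
        exact hMu.mul hP
      have hone : ∃ t : ℝ, 0 < t ∧ t * t - (1 / M) * t + s = 0 ∧ ¬ IsUnit (L - t • (1:H →L[ℝ] H)) := by
        by_cases h1 : IsUnit (L - t₁ • (1:H →L[ℝ] H))
        · refine ⟨t₂, ht₂pos, ?_, ?_⟩
          · rw [← hsum, ← hprod]; ring
          · intro h2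
            exact hMQ (h1.mul h2)
        · refine ⟨t₁, ht₁pos, ?_, h1⟩
          rw [← hsum, ← hprod]; ring
      obtain ⟨t, htpos, hroot, htnu⟩ := hone
      have htspec : t ∈ spectrum ℝ L := by
        rw [spectrum.mem_iff, Algebra.algebraMap_eq_smul_one]
        intro habs
        apply htnu
        have : L - t • (1:H →L[ℝ] H) = -(t • 1 - L) := by abel
        rw [this]
        exact habs.neg
      have htge : δ₀ ≤ t := by
        rcases hgap t htspec with h0 | h0
        · exact absurd h0 htpos.ne'
        · rwa [abs_of_pos htpos] at h0
      -- from the root equation: M = t / (t² + s) ≤ 1/t ≤ 1/δ₀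
      have hMt : M * (t * t + s) = t := by
        have : t * t + s = (1 / M) * t := by linarith [hroot]
        rw [this]
        field_simp
      rw [div_lt_iff₀ hδ₀] at hM'
      nlinarith [mul_nonneg (mul_nonneg hM0.le htpos.le) (sub_nonneg.mpr htge),
        mul_pos htpos (show (0:ℝ) < M * δ₀ - 1 by linarith), mul_pos hM0 hs, hMt]
  intro x
  calc ⟪(L * (↑u⁻¹ : H →L[ℝ] H)) x, x⟫_ℝ ≤ M * ‖x‖ ^ 2 := hM x
    _ ≤ (1 / δ₀) * ‖x‖ ^ 2 := by nlinarith [sq_nonneg ‖x‖]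

/-- Norm bound `‖L (L²+s)⁻¹‖ ≤ 1/δ₀` under the spectral gap hypothesis. -/
private lemma key_norm_bound [Nontrivial H] {L : H →L[ℝ] H} (hL : IsSelfAdjoint L) {δ₀ : ℝ}
    (hδ₀ : 0 < δ₀) (hgap : ∀ t : ℝ, t ∈ spectrum ℝ L → t = 0 ∨ δ₀ ≤ |t|)
    {s : ℝ} (hs : 0 < s) (u : (H →L[ℝ] H)ˣ) (hu : (↑u : H →L[ℝ] H) = L * L + s • 1) :
    ‖L * (↑u⁻¹ : H →L[ℝ] H)‖ ≤ 1 / δ₀ := by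
  have hcomm : Commute L (↑u : H →L[ℝ] H) := by
    rw [hu]
    exact Commute.add_right ((Commute.refl L).mul_right (Commute.refl L))
      (((Commute.one_right L)).smul_right s)
  have hcinv : Commute L (↑u⁻¹ : H →L[ℝ] H) := hcomm.units_inv_right
  have husa : IsSelfAdjoint (↑u : H →L[ℝ] H) := by
    rw [hu]
    refine IsSelfAdjoint.add ?_ ?_
    · rw [IsSelfAdjoint, star_mul, hL.star_eq]
    · rw [IsSelfAdjoint, star_smul, star_trivial, star_one]
  have hinvsa : IsSelfAdjoint (↑u⁻¹ : H →L[ℝ] H) := isSelfAdjoint_units_inv u husa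
  have hSsa : IsSelfAdjoint (L * (↑u⁻¹ : H →L[ℝ] H)) := by
    rw [IsSelfAdjoint, star_mul, hinvsa.star_eq, hL.star_eq]
    exact hcinv.symm.eq
  have hupper := form_upper_bound hL hδ₀ hgap hs u hu
  -- lower bound via -L
  have hnegsa : IsSelfAdjoint (-L) := hL.neg
  have hnegu : (↑u : H →L[ℝ] H) = (-L) * (-L) + s • 1 := by rw [neg_mul_neg]; exact hu
  have hneggap : ∀ t : ℝ, t ∈ spectrum ℝ (-L) → t = 0 ∨ δ₀ ≤ |t| := by
    intro t ht
    rw [spectrum.mem_iff] at ht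
    have : -t ∈ spectrum ℝ L := by
      rw [spectrum.mem_iff, Algebra.algebraMap_eq_smul_one]
      intro habs
      apply ht
      have : (algebraMap ℝ (H →L[ℝ] H)) t - (-L) = -((-t) • 1 - L) := by
        rw [Algebra.algebraMap_eq_smul_one, neg_smul]
        abel
      rw [this]
      exact habs.neg
    rcases hgap (-t) this with h0 | h0
    · left; linarith [neg_eq_zero.mp h0]
    · right; rwa [abs_neg] at h0
  have hlower := form_upper_bound hnegsa hδ₀ hneggap hs u hnegu
  refine norm_le_of_forall_abs_inner_le hSsa (by positivity) fun x => ?_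
  rw [abs_le]
  constructor
  · have := hlower x
    have hng : ((-L) * (↑u⁻¹ : H →L[ℝ] H)) x = -((L * (↑u⁻¹ : H →L[ℝ] H)) x) := by
      simp [neg_mul]
    rw [hng, inner_neg_left] at this
    linarith
  · exact hupper x

/-- Crude bound `‖L (L²+s)⁻¹‖ ≤ 1/√s` (no gap needed). -/
private lemma crude_norm_bound {L : H →L[ℝ] H} (hL : IsSelfAdjoint L)
    {s : ℝ} (hs : 0 < s) (u : (H →L[ℝ] H)ˣ) (hu : (↑u : H →L[ℝ] H) = L * L + s • 1) :
    ‖L * (↑u⁻¹ : H →L[ℝ] H)‖ ≤ 1 / Real.sqrt s := by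
  have hsq : 0 < Real.sqrt s := Real.sqrt_pos.mpr hs
  refine ContinuousLinearMap.opNorm_le_bound _ (by positivity) fun x => ?_
  set y := (↑u⁻¹ : H →L[ℝ] H) x with hy
  have hxy : (↑u : H →L[ℝ] H) y = x := by
    rw [hy, ← ContinuousLinearMap.mul_apply, u.mul_inv, ContinuousLinearMap.one_apply]
  have happ : (L * (↑u⁻¹ : H →L[ℝ] H)) x = L y := by
    rw [ContinuousLinearMap.mul_apply]
  have hform : ⟪(↑u : H →L[ℝ] H) y, y⟫_ℝ = ‖L y‖ ^ 2 + s * ‖y‖ ^ 2 := by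
    rw [hu]
    simp only [ContinuousLinearMap.add_apply, ContinuousLinearMap.mul_apply,
      ContinuousLinearMap.smul_apply, ContinuousLinearMap.one_apply, inner_add_left,
      inner_smul_left, RCLike.star_def, starRingEnd_apply, star_trivial]
    rw [sa_symm hL, real_inner_self_eq_norm_mul_norm, real_inner_self_eq_norm_mul_norm]
    ring
  have hinner : ⟪(↑u : H →L[ℝ] H) y, y⟫_ℝ ≤ ‖x‖ * ‖y‖ := by
    rw [hxy]
    exact real_inner_le_norm _ _
  have hybound : s * ‖y‖ ≤ ‖x‖ := by
    rcases eq_or_ne y 0 with h0 | h0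
    · simp [h0]
    have hyn : 0 < ‖y‖ := norm_pos_iff.mpr h0
    have h1 : s * ‖y‖ ^ 2 ≤ ‖x‖ * ‖y‖ := by nlinarith [hform, hinner, sq_nonneg ‖L y‖]
    nlinarith
  have hLy2 : ‖L y‖ ^ 2 ≤ ‖x‖ ^ 2 / s := by
    have hsy : (0:ℝ) ≤ s * ‖y‖ ^ 2 := by positivity
    have h1 : ‖L y‖ ^ 2 ≤ ‖x‖ * ‖y‖ := by linarith [hform, hinner, hsy]
    have h2 : ‖y‖ ≤ ‖x‖ / s := by rw [le_div_iff₀ hs]; linarith [hybound]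
    have h3 : ‖x‖ * ‖y‖ ≤ ‖x‖ * (‖x‖ / s) := by
      gcongr
    calc ‖L y‖ ^ 2 ≤ ‖x‖ * (‖x‖ / s) := le_trans h1 h3
      _ = ‖x‖ ^ 2 / s := by ring
  rw [happ]
  have hrhs : (1 / Real.sqrt s * ‖x‖) ^ 2 = ‖x‖ ^ 2 / s := by
    rw [mul_pow, div_pow, one_pow, Real.sq_sqrt hs.le]
    ring
  have h4 : ‖L y‖ ^ 2 ≤ (1 / Real.sqrt s * ‖x‖) ^ 2 := by rw [hrhs]; exact hLy2
  have h5 : 0 ≤ 1 / Real.sqrt s * ‖x‖ := by positivity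
  nlinarith [norm_nonneg (L y)]

/-- The spectral gap estimate: for self-adjoint `L` with spectral gap `(−δ₀,δ₀) ∩ σ(L) ⊆ {0}`,
every `x ⊥ ker L` satisfies `δ₀ ‖x‖ ≤ ‖L x‖`. -/
private lemma gap_bound {L : H →L[ℝ] H} (hL : IsSelfAdjoint L) {δ₀ : ℝ} (hδ₀ : 0 < δ₀)
    (hspec : spectrum ℝ L ∩ Set.Ioo (-δ₀) δ₀ ⊆ {0}) {x : H}
    (hx : x ∈ (LinearMap.ker (L : H →ₗ[ℝ] H))ᗮ) : δ₀ * ‖x‖ ≤ ‖L x‖ := by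
  rcases eq_or_ne x 0 with rfl | hx0
  · simp
  haveI : Nontrivial H := nontrivial_of_ne x 0 hx0
  have hgap : ∀ t : ℝ, t ∈ spectrum ℝ L → t = 0 ∨ δ₀ ≤ |t| := by
    intro t ht
    by_cases habs : |t| < δ₀
    · left
      have : t ∈ spectrum ℝ L ∩ Set.Ioo (-δ₀) δ₀ := by
        refine ⟨ht, ?_⟩
        rw [Set.mem_Ioo, ← abs_lt]
        exact habs
      exact hspec this
    · right; linarith [not_lt.mp habs]
  -- units for each s > 0
  have hunit : ∀ s : ℝ, 0 < s → IsUnit (L * L + s • (1 : H →L[ℝ] H)) := by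
    intro s hs
    refine isUnit_of_coercive hs fun z => ?_
    simp only [ContinuousLinearMap.add_apply, ContinuousLinearMap.mul_apply,
      ContinuousLinearMap.smul_apply, ContinuousLinearMap.one_apply, inner_add_left,
      inner_smul_left, RCLike.star_def, starRingEnd_apply, star_trivial]
    rw [sa_symm hL, real_inner_self_eq_norm_mul_norm, real_inner_self_eq_norm_mul_norm]
    nlinarith [sq_nonneg ‖L z‖]
  set sq : ℕ → ℝ := fun n => 1 / (n + 1) with hsq
  have hsqpos : ∀ n : ℕ, 0 < sq n := fun n => by positivity
  set un : ℕ → (H →L[ℝ] H)ˣ := fun n => (hunit (sq n) (hsqpos n)).unit with hun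
  have hun_spec : ∀ n, (↑(un n) : H →L[ℝ] H) = L * L + (sq n) • 1 := fun n =>
    (hunit (sq n) (hsqpos n)).unit_spec
  set B : ℕ → (H →L[ℝ] H) := fun n => L * (↑(un n)⁻¹ : H →L[ℝ] H) with hB
  set Eop : ℕ → (H →L[ℝ] H) := fun n => (sq n) • (↑(un n)⁻¹ : H →L[ℝ] H) with hEop
  have hBnorm : ∀ n, ‖B n‖ ≤ 1 / δ₀ := fun n =>
    key_norm_bound hL hδ₀ hgap (hsqpos n) (un n) (hun_spec n)
  have hBcrude : ∀ n, ‖B n‖ ≤ 1 / Real.sqrt (sq n) := fun n =>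
    crude_norm_bound hL (hsqpos n) (un n) (hun_spec n)
  -- commutation facts
  have hcomm : ∀ n, Commute L (↑(un n) : H →L[ℝ] H) := by
    intro n
    rw [hun_spec n]
    exact Commute.add_right ((Commute.refl L).mul_right (Commute.refl L))
      (((Commute.one_right L)).smul_right _)
  have hcinv : ∀ n, Commute L (↑(un n)⁻¹ : H →L[ℝ] H) := fun n => (hcomm n).units_inv_right
  have hucomm : ∀ n m, Commute (↑(un n) : H →L[ℝ] H) (↑(un m) : H →L[ℝ] H) := by
    intro n m
    rw [hun_spec n, hun_spec m]
    have hLL : Commute (L * L) (L * L) := Commute.refl _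
    refine Commute.add_right (Commute.add_left hLL ?_) (Commute.add_left ?_ ?_)
    · exact ((Commute.one_left (L*L)).smul_left _)
    · exact ((Commute.one_right (L*L)).smul_right _)
    · exact ((Commute.refl (1 : H →L[ℝ] H)).smul_left _).smul_right _
  -- difference formula: Eop n - Eop m = (sq n - sq m) • (B n * B m)
  have hdiff : ∀ n m, Eop n - Eop m = (sq n - sq m) • (B n * B m) := by
    intro n m
    set X := (↑(un n)⁻¹ : H →L[ℝ] H)
    set Y := (↑(un m)⁻¹ : H →L[ℝ] H)
    have hXY : Commute X (↑(un m) : H →L[ℝ] H) := ((hucomm m n).units_inv_right).symm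
    have hXum : X * Y * (↑(un m) : H →L[ℝ] H) = X := by
      rw [mul_assoc]
      rw [show Y * (↑(un m) : H →L[ℝ] H) = 1 from (un m).inv_mul, mul_one]
    have hXun : X * Y * (↑(un n) : H →L[ℝ] H) = Y := by
      have hYun : Commute Y (↑(un n) : H →L[ℝ] H) := ((hucomm n m).units_inv_right).symm
      rw [mul_assoc, hYun.eq, ← mul_assoc]
      rw [show X * (↑(un n) : H →L[ℝ] H) = 1 from (un n).inv_mul, one_mul]
    have key : Eop n - Eop m = (X * Y) * ((sq n) • (↑(un m) : H →L[ℝ] H)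
        - (sq m) • (↑(un n) : H →L[ℝ] H)) := by
      simp only [hEop]
      rw [mul_sub, mul_smul_comm, mul_smul_comm, hXum, hXun]
    have hinner2 : (sq n) • (↑(un m) : H →L[ℝ] H) - (sq m) • (↑(un n) : H →L[ℝ] H)
        = (sq n - sq m) • (L * L) := by
      rw [hun_spec n, hun_spec m, smul_add, smul_add, smul_smul, smul_smul, sub_smul]
      rw [mul_comm (sq n) (sq m)]
      abel
    rw [key, hinner2, mul_smul_comm]
    congr 1
    -- X * Y * (L * L) = B n * B m = (L * X) * (L * Y)
    have h1 : (L * X) * (L * Y) = L * L * (X * Y) := by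
      rw [mul_assoc, ← mul_assoc X L Y, ← (hcinv n).eq, mul_assoc, ← mul_assoc]
    have h2 : Commute (L * L) (X * Y) :=
      (((hcinv n).mul_left (hcinv n)).mul_right (((hcinv m).mul_left (hcinv m))))
    simp only [hB]
    rw [h1, ← h2.eq]
  have hEdiff : ∀ n m N : ℕ, N ≤ n → N ≤ m →
      dist (Eop n) (Eop m) ≤ (1 / (N + 1)) * (1 / δ₀ ^ 2) := by
    intro n m N hn hm
    rw [dist_eq_norm, hdiff n m]
    have hnsmul : ‖(sq n - sq m) • (B n * B m)‖ ≤ |sq n - sq m| * ‖B n * B m‖ :=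
      ContinuousLinearMap.opNorm_smul_le _ _
    have h1 : ‖(sq n - sq m) • (B n * B m)‖ ≤ |sq n - sq m| * (‖B n‖ * ‖B m‖) := by
      refine le_trans hnsmul ?_
      gcongr
      exact norm_mul_le _ _
    have h2 : |sq n - sq m| ≤ 1 / (N + 1) := by
      rw [abs_sub_le_iff]
      constructor
      · have : sq n ≤ 1 / (N+1) := by
          rw [hsq]
          have hNn : ((N:ℝ) + 1) ≤ (n:ℝ) + 1 := by
            have := (Nat.cast_le (α := ℝ)).mpr hn
            linarith
          exact one_div_le_one_div_of_le (by positivity) hNn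
        linarith [(hsqpos m).le]
      · have : sq m ≤ 1 / (N+1) := by
          rw [hsq]
          have hNm : ((N:ℝ) + 1) ≤ (m:ℝ) + 1 := by
            have := (Nat.cast_le (α := ℝ)).mpr hm
            linarith
          exact one_div_le_one_div_of_le (by positivity) hNm
        linarith [(hsqpos n).le]
    have h3 : ‖B n‖ * ‖B m‖ ≤ (1/δ₀) * (1/δ₀) := by
      have := hBnorm n; have := hBnorm m
      have hb1 : (0:ℝ) ≤ ‖B n‖ := norm_nonneg _
      have hb2 : (0:ℝ) ≤ ‖B m‖ := norm_nonneg _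
      nlinarith
    calc ‖(sq n - sq m) • (B n * B m)‖ ≤ |sq n - sq m| * (‖B n‖ * ‖B m‖) := h1
      _ ≤ (1 / (N + 1)) * ((1/δ₀) * (1/δ₀)) := by
          apply mul_le_mul h2 h3 (by positivity)
          positivity
      _ = (1 / (N + 1)) * (1 / δ₀ ^ 2) := by ring
  have hcauchy : CauchySeq Eop := by
    refine cauchySeq_of_le_tendsto_0 (fun N => (1 / (N + 1)) * (1 / δ₀ ^ 2)) hEdiff ?_
    have h0 : Filter.Tendsto (fun N : ℕ => 1 / ((N:ℝ) + 1)) Filter.atTop (nhds 0) :=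
      tendsto_one_div_add_atTop_nhds_zero_nat
    have := h0.mul_const (1 / δ₀ ^ 2)
    simpa using this
  obtain ⟨Elim, hElim⟩ := cauchySeq_tendsto_of_complete hcauchy
  -- L * Elim = 0
  have hLE : L * Elim = 0 := by
    have h1 : Filter.Tendsto (fun n => L * Eop n) Filter.atTop (nhds (L * Elim)) :=
      (Filter.Tendsto.const_mul L hElim)
    have h2 : Filter.Tendsto (fun n => L * Eop n) Filter.atTop (nhds 0) := by
      rw [tendsto_iff_norm_sub_tendsto_zero]
      simp only [sub_zero]
      have hb : ∀ n, ‖L * Eop n‖ ≤ Real.sqrt (sq n) := by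
        intro n
        have heq : L * Eop n = (sq n) • B n := by
          simp only [hEop, hB, mul_smul_comm]
        have hns : ‖(sq n) • B n‖ ≤ sq n * ‖B n‖ := by
          have h' : ‖(sq n) • B n‖ ≤ |sq n| * ‖B n‖ :=
            ContinuousLinearMap.opNorm_smul_le _ _
          rwa [abs_of_pos (hsqpos n)] at h'
        rw [heq]
        refine le_trans hns ?_
        calc (sq n) * ‖B n‖ ≤ (sq n) * (1 / Real.sqrt (sq n)) :=
              mul_le_mul_of_nonneg_left (hBcrude n) (hsqpos n).le
          _ = Real.sqrt (sq n) := by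
              rw [← Real.sq_sqrt (hsqpos n).le]
              field_simp
              rw [Real.sqrt_sq (Real.sqrt_nonneg _), pow_two, mul_div_assoc,
                div_self (Real.sqrt_pos.mpr (hsqpos n)).ne', mul_one]
      have hsqrt0 : Filter.Tendsto (fun n : ℕ => Real.sqrt (sq n)) Filter.atTop (nhds 0) := by
        have : Filter.Tendsto sq Filter.atTop (nhds 0) := by
          rw [hsq]; exact tendsto_one_div_add_atTop_nhds_zero_nat
        have h' := (Real.continuous_sqrt.tendsto 0).comp this
        rw [Real.sqrt_zero] at h'
        exact h'
      exact squeeze_zero (fun n => norm_nonneg _) hb hsqrt0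
    exact tendsto_nhds_unique h1 h2
  -- key identity: B n (L x) + Eop n x = x
  have hid : ∀ n, (B n) (L x) + (Eop n) x = x := by
    intro n
    have hop : (B n) * L + Eop n = 1 := by
      simp only [hB, hEop]
      have h1 : (L * (↑(un n)⁻¹ : H →L[ℝ] H)) * L = (L * L) * (↑(un n)⁻¹ : H →L[ℝ] H) := by
        rw [mul_assoc, ← (hcinv n).eq, ← mul_assoc]
      rw [h1]
      rw [show (L * L) * (↑(un n)⁻¹ : H →L[ℝ] H) + (sq n) • (↑(un n)⁻¹ : H →L[ℝ] H)
          = (L * L + (sq n) • 1) * (↑(un n)⁻¹ : H →L[ℝ] H) by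
            rw [add_mul, smul_mul_assoc, one_mul]]
      rw [← hun_spec n, (un n).mul_inv]
    have := congrArg (fun T : H →L[ℝ] H => T x) hop
    simpa [ContinuousLinearMap.add_apply, ContinuousLinearMap.mul_apply] using this
  -- pass to the limit in the inner product identity
  have hxnorm : ∀ n, ‖x‖ ^ 2 ≤ (1/δ₀) * ‖x‖ * ‖L x‖ + ⟪x, (Eop n) x⟫_ℝ := by
    intro n
    have h1 : ‖x‖ ^ 2 = ⟪x, (B n) (L x)⟫_ℝ + ⟪x, (Eop n) x⟫_ℝ := by
      rw [← inner_add_right, hid n, real_inner_self_eq_norm_mul_norm]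
      ring
    have h2 : ⟪x, (B n) (L x)⟫_ℝ ≤ (1/δ₀) * ‖x‖ * ‖L x‖ := by
      calc ⟪x, (B n) (L x)⟫_ℝ ≤ ‖x‖ * ‖(B n) (L x)‖ := real_inner_le_norm _ _
        _ ≤ ‖x‖ * (‖B n‖ * ‖L x‖) := by gcongr; exact (B n).le_opNorm _
        _ ≤ ‖x‖ * ((1/δ₀) * ‖L x‖) := by
            gcongr
            exact hBnorm n
        _ = (1/δ₀) * ‖x‖ * ‖L x‖ := by ring
    linarith [h1, h2]
  have hEx : Filter.Tendsto (fun n => ⟪x, (Eop n) x⟫_ℝ) Filter.atTop (nhds 0) := by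
    have happ : Filter.Tendsto (fun n => (Eop n) x) Filter.atTop (nhds (Elim x)) := by
      rw [tendsto_iff_norm_sub_tendsto_zero]
      have hb : ∀ n, ‖(Eop n) x - Elim x‖ ≤ ‖Eop n - Elim‖ * ‖x‖ := by
        intro n
        rw [show (Eop n) x - Elim x = (Eop n - Elim) x by simp [ContinuousLinearMap.sub_apply]]
        exact (Eop n - Elim).le_opNorm x
      have h0 : Filter.Tendsto (fun n => ‖Eop n - Elim‖ * ‖x‖) Filter.atTop (nhds 0) := by
        have := (tendsto_iff_norm_sub_tendsto_zero.mp hElim).mul_const ‖x‖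
        simpa using this
      exact squeeze_zero (fun n => norm_nonneg _) hb h0
    have hlim : ⟪x, Elim x⟫_ℝ = 0 := by
      have hker : Elim x ∈ LinearMap.ker (L : H →ₗ[ℝ] H) := by
        rw [LinearMap.mem_ker]
        have : (L * Elim) x = 0 := by rw [hLE]; simp
        simpa [ContinuousLinearMap.mul_apply] using this
      rw [real_inner_comm]
      exact hx (Elim x) hker
    have hten : Filter.Tendsto (fun n : ℕ => ⟪x, (Eop n) x⟫_ℝ) Filter.atTop
        (nhds (⟪x, Elim x⟫_ℝ)) := Filter.Tendsto.inner tendsto_const_nhds happ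
    rw [hlim] at hten
    exact hten
  have hfinal : ‖x‖ ^ 2 ≤ (1/δ₀) * ‖x‖ * ‖L x‖ := by
    have h1 : Filter.Tendsto (fun n => (1/δ₀) * ‖x‖ * ‖L x‖ + ⟪x, (Eop n) x⟫_ℝ)
        Filter.atTop (nhds ((1/δ₀) * ‖x‖ * ‖L x‖ + 0)) :=
      Filter.Tendsto.add tendsto_const_nhds hEx
    rw [add_zero] at h1
    exact ge_of_tendsto h1 (Filter.Eventually.of_forall hxnorm)
  have hxn : 0 < ‖x‖ := norm_pos_iff.mpr hx0
  rw [show (1/δ₀) * ‖x‖ * ‖L x‖ = (‖x‖ * ‖L x‖) / δ₀ by ring] at hfinal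
  rw [le_div_iff₀ hδ₀] at hfinal
  have : δ₀ * ‖x‖ * ‖x‖ ≤ ‖L x‖ * ‖x‖ := by nlinarith
  exact le_of_mul_le_mul_right (by nlinarith) hxn

end GapLemma

section Projections

variable {H : Type*} [NormedAddCommGroup H] [InnerProductSpace ℝ H] [CompleteSpace H]

private lemma orthProj_eq_of {U : Submodule ℝ H} (hU : IsClosed (U : Set H)) {z y : H}
    (hy : y ∈ U) (hzy : z - y ∈ Uᗮ) : orthProj U z = y := by
  have htc := hU.submodule_topologicalClosure_eq
  exact Submodule.eq_starProjection_of_mem_orthogonal (htc.ge hy)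
    (by rw [htc]; exact hzy)

private lemma orthProj_mem {U : Submodule ℝ H} (hU : IsClosed (U : Set H)) (z : H) :
    orthProj U z ∈ U := by
  have htc := hU.submodule_topologicalClosure_eq
  exact htc.le (SetLike.coe_mem ((U.topologicalClosure.orthogonalProjectionOnto) z))

private lemma orthProj_of_mem {U : Submodule ℝ H} (hU : IsClosed (U : Set H)) {z : H}
    (hz : z ∈ U) : orthProj U z = z :=
  orthProj_eq_of hU hz (by simp)

private lemma orthProj_of_mem_orthogonal {U : Submodule ℝ H} (hU : IsClosed (U : Set H)) {z : H}
    (hz : z ∈ Uᗮ) : orthProj U z = 0 :=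
  orthProj_eq_of hU (zero_mem U) (by simpa using hz)

private lemma orthProj_inner (U : Submodule ℝ H) (z v : H) :
    ⟪orthProj U z, v⟫_ℝ = ⟪z, orthProj U v⟫_ℝ :=
  Submodule.inner_starProjection_left_eq_right U.topologicalClosure z v

end Projections

/-- Let `L` be a bounded self-adjoint operator on a real Hilbert space with
spectral gap `(−δ₀, δ₀) ∩ spectrum(L) ⊆ {0}`, and let `V ⊆ W` be closed subspaces with
`ker L ⊆ V`. With `U = Vᗮ ⊓ W` the orthogonal complement of `V` in `W`, for every `x ∈ U` one
has `‖π_U (L x)‖ ≥ (δ₀ − ‖[π_W, L]‖ − ‖[π_V, L]‖)‖x‖`; in particular if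
`‖[π_W, L]‖ + ‖[π_V, L]‖ < δ₀` then `π_U ∘ L` is injective on `U`. -/
theorem proj_complement_nondegenerate
    {H : Type*} [NormedAddCommGroup H] [InnerProductSpace ℝ H] [CompleteSpace H]
    (L : H →L[ℝ] H) (hL_sa : IsSelfAdjoint L)
    (δ₀ : ℝ) (hδ₀ : 0 < δ₀)
    (hspec : spectrum ℝ L ∩ Set.Ioo (-δ₀) δ₀ ⊆ {0})
    (V W : Submodule ℝ H)
    (hV_closed : IsClosed (V : Set H)) (hW_closed : IsClosed (W : Set H))
    (hVW : V ≤ W) (hker : LinearMap.ker (L : H →ₗ[ℝ] H) ≤ V) :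
    (∀ x ∈ Vᗮ ⊓ W,
      (δ₀ - ‖orthProj W * L - L * orthProj W‖ - ‖orthProj V * L - L * orthProj V‖) * ‖x‖
        ≤ ‖orthProj (Vᗮ ⊓ W) (L x)‖) ∧
    (‖orthProj W * L - L * orthProj W‖ + ‖orthProj V * L - L * orthProj V‖ < δ₀ →
      ∀ x ∈ Vᗮ ⊓ W, orthProj (Vᗮ ⊓ W) (L x) = 0 → x = 0) := by
  have hU_closed : IsClosed ((Vᗮ ⊓ W : Submodule ℝ H) : Set H) := by
    rw [Submodule.coe_inf]
    exact (Submodule.isClosed_orthogonal V).inter hW_closed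
  -- key identity for x ∈ U
  have key : ∀ x ∈ Vᗮ ⊓ W, orthProj (Vᗮ ⊓ W) (L x)
      = L x + (orthProj W * L - L * orthProj W) x - (orthProj V * L - L * orthProj V) x := by
    intro x hx
    rw [Submodule.mem_inf] at hx
    obtain ⟨hxV, hxW⟩ := hx
    have hPWx : orthProj W x = x := orthProj_of_mem hW_closed hxW
    have hPVx : orthProj V x = 0 := orthProj_of_mem_orthogonal hV_closed hxV
    have hRHS : L x + (orthProj W * L - L * orthProj W) x - (orthProj V * L - L * orthProj V) x
        = orthProj W (L x) - orthProj V (L x) := by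
      simp only [ContinuousLinearMap.sub_apply, ContinuousLinearMap.mul_apply, hPWx, hPVx,
        map_zero]
      abel
    rw [hRHS]
    refine orthProj_eq_of hU_closed ?_ ?_
    · rw [Submodule.mem_inf]
      constructor
      · rw [Submodule.mem_orthogonal]
        intro v hv
        have hPWv : orthProj W v = v := orthProj_of_mem hW_closed (hVW hv)
        have hPVv : orthProj V v = v := orthProj_of_mem hV_closed hv
        rw [inner_sub_right, real_inner_comm ((orthProj W) (L x)) v,
          real_inner_comm ((orthProj V) (L x)) v, orthProj_inner W (L x) v,
          orthProj_inner V (L x) v, hPWv, hPVv, sub_self]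
      · exact Submodule.sub_mem W (orthProj_mem hW_closed (L x))
          (hVW (orthProj_mem hV_closed (L x)))
    · rw [Submodule.mem_orthogonal]
      intro w hw
      rw [Submodule.mem_inf] at hw
      obtain ⟨hwV, hwW⟩ := hw
      have hPWw : orthProj W w = w := orthProj_of_mem hW_closed hwW
      have hPVw : orthProj V w = 0 := orthProj_of_mem_orthogonal hV_closed hwV
      rw [inner_sub_right, inner_sub_right, real_inner_comm ((orthProj W) (L x)) w,
        real_inner_comm ((orthProj V) (L x)) w, orthProj_inner W (L x) w,
        orthProj_inner V (L x) w, hPWw, hPVw, inner_zero_right, real_inner_comm (L x) w]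
      ring
  have main : ∀ x ∈ Vᗮ ⊓ W,
      (δ₀ - ‖orthProj W * L - L * orthProj W‖ - ‖orthProj V * L - L * orthProj V‖) * ‖x‖
        ≤ ‖orthProj (Vᗮ ⊓ W) (L x)‖ := by
    intro x hx
    rw [Submodule.mem_inf] at hx
    have hxker : x ∈ (LinearMap.ker (L : H →ₗ[ℝ] H))ᗮ := Submodule.orthogonal_le hker hx.1
    have hLx : δ₀ * ‖x‖ ≤ ‖L x‖ := gap_bound hL_sa hδ₀ hspec hxker
    rw [key x (Submodule.mem_inf.mpr hx)]
    set a := L x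
    set b := (orthProj W * L - L * orthProj W) x
    set c := (orthProj V * L - L * orthProj V) x
    have h1 : ‖a‖ ≤ ‖a + b - c‖ + ‖b‖ + ‖c‖ := by
      have : a = (a + b - c) - b + c := by abel
      calc ‖a‖ = ‖(a + b - c) - b + c‖ := by rw [← this]
        _ ≤ ‖(a + b - c) - b‖ + ‖c‖ := norm_add_le _ _
        _ ≤ ‖a + b - c‖ + ‖b‖ + ‖c‖ := by
            have := norm_sub_le (a + b - c) b
            linarith
    have hb : ‖b‖ ≤ ‖orthProj W * L - L * orthProj W‖ * ‖x‖ :=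
      (orthProj W * L - L * orthProj W).le_opNorm x
    have hc : ‖c‖ ≤ ‖orthProj V * L - L * orthProj V‖ * ‖x‖ :=
      (orthProj V * L - L * orthProj V).le_opNorm x
    have : δ₀ * ‖x‖ ≤ ‖a + b - c‖ + ‖orthProj W * L - L * orthProj W‖ * ‖x‖
        + ‖orthProj V * L - L * orthProj V‖ * ‖x‖ := by
      calc δ₀ * ‖x‖ ≤ ‖a‖ := hLx
        _ ≤ ‖a + b - c‖ + ‖b‖ + ‖c‖ := h1
        _ ≤ _ := by linarith [hb, hc]
    linarith [this]
  refine ⟨main, ?_⟩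
  intro hsum x hx h0
  have := main x hx
  rw [h0, norm_zero] at this
  have hpos : 0 < δ₀ - ‖orthProj W * L - L * orthProj W‖ - ‖orthProj V * L - L * orthProj V‖ := by
    linarith
  have hxle : ‖x‖ ≤ 0 := by nlinarith [norm_nonneg x]
  have : ‖x‖ = 0 := le_antisymm hxle (norm_nonneg x)
  exact norm_eq_zero.mp this
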